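/- Let T be a finite tree with diameter at least 3 and maximum degree Δ ≥ 3, and let h be an integer with h ≥ Δ. Then σ_{h,1,1}(T) = σ*_{h,1,1}(T) = 2h + Δ − 1. -/

import Mathlib

open SimpleGraph

/-- An `L(h,p,p)`-labelling of `G` with span `ℓ`: labels in `{0,…,ℓ}`, labels of vertices at
distance 1 differ by at least `h`, labels of vertices at distance 2 or 3 differ by at least `p`. -/
def IsLLabelling {V : Type} (G : SimpleGraph V) (h p ℓ : ℕ) (f : V → ℕ) : Prop :=
  (∀ v, f v ≤ ℓ) ∧
  (∀ u v, G.dist u v = 1 → (h : ℤ) ≤ |(f u : ℤ) - (f v : ℤ)|) ∧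
  (∀ u v, G.dist u v = 2 ∨ G.dist u v = 3 → (p : ℤ) ≤ |(f u : ℤ) - (f v : ℤ)|)

/-- `λ_{h,p,p}(G)`: the minimum span of an `L(h,p,p)`-labelling of `G`. -/
noncomputable def lambdaNum {V : Type} (G : SimpleGraph V) (h p : ℕ) : ℕ :=
  sInf {ℓ : ℕ | ∃ f : V → ℕ, IsLLabelling G h p ℓ f}

/-- A circular interval modulo `n`: a set of residues of the form `{a, a+1, …, a+s}` mod `n`. -/
def IsCircInterval (n : ℕ) (I : Set (ZMod n)) : Prop :=
  ∃ (a : ZMod n) (s : ℕ), I = {x : ZMod n | ∃ i : ℕ, i ≤ s ∧ x = a + (i : ZMod n)}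

/-- An elegant `L(h,p,p)`-labelling: additionally each vertex `u` has a circular interval `I u`
modulo `ℓ+1` containing the labels of all neighbours of `u`, with `I u ∩ I v = ∅` for edges `uv`. -/
def IsElegantLLabelling {V : Type} (G : SimpleGraph V) (h p ℓ : ℕ) (f : V → ℕ) : Prop :=
  IsLLabelling G h p ℓ f ∧
  ∃ I : V → Set (ZMod (ℓ + 1)),
    (∀ u, IsCircInterval (ℓ + 1) (I u)) ∧
    (∀ u w, G.Adj u w → ((f w : ZMod (ℓ + 1)) ∈ I u)) ∧
    (∀ u v, G.Adj u v → I u ∩ I v = ∅)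

/-- `λ*_{h,p,p}(G)`: the minimum span of an elegant `L(h,p,p)`-labelling of `G`. -/
noncomputable def lambdaStar {V : Type} (G : SimpleGraph V) (h p : ℕ) : ℕ :=
  sInf {ℓ : ℕ | ∃ f : V → ℕ, IsElegantLLabelling G h p ℓ f}

/-- The `ℓ`-cyclic distance between labels `a` and `b`. -/
def cycDist (ℓ a b : ℕ) : ℤ :=
  min |(a : ℤ) - (b : ℤ)| ((ℓ : ℤ) - |(a : ℤ) - (b : ℤ)|)

/-- A `C(h,p,p)`-labelling of `G` with span `ℓ`: labels in `{0,…,ℓ-1}`, and the `ℓ`-cyclic distance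
between labels of vertices at distance 1 (resp. 2 or 3) is at least `h` (resp. `p`). -/
def IsCLabelling {V : Type} (G : SimpleGraph V) (h p ℓ : ℕ) (f : V → ℕ) : Prop :=
  (∀ v, f v < ℓ) ∧
  (∀ u v, G.dist u v = 1 → (h : ℤ) ≤ cycDist ℓ (f u) (f v)) ∧
  (∀ u v, G.dist u v = 2 ∨ G.dist u v = 3 → (p : ℤ) ≤ cycDist ℓ (f u) (f v))

/-- `σ_{h,p,p}(G)`: the minimum positive `ℓ` such that `G` has a `C(h,p,p)`-labelling of span `ℓ`. -/
noncomputable def sigmaNum {V : Type} (G : SimpleGraph V) (h p : ℕ) : ℕ :=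
  sInf {ℓ : ℕ | 0 < ℓ ∧ ∃ f : V → ℕ, IsCLabelling G h p ℓ f}

/-- An elegant `C(h,p,p)`-labelling: additionally each vertex `u` has a circular interval `I u`
modulo `ℓ` containing the labels of all neighbours of `u`, with `I u ∩ I v = ∅` for edges `uv`. -/
def IsElegantCLabelling {V : Type} (G : SimpleGraph V) (h p ℓ : ℕ) (f : V → ℕ) : Prop :=
  IsCLabelling G h p ℓ f ∧
  ∃ I : V → Set (ZMod ℓ),
    (∀ u, IsCircInterval ℓ (I u)) ∧
    (∀ u w, G.Adj u w → ((f w : ZMod ℓ) ∈ I u)) ∧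
    (∀ u v, G.Adj u v → I u ∩ I v = ∅)

/-- `σ*_{h,p,p}(G)`: the minimum positive `ℓ` such that `G` has an elegant `C(h,p,p)`-labelling
of span `ℓ`. -/
noncomputable def sigmaStar {V : Type} (G : SimpleGraph V) (h p : ℕ) : ℕ :=
  sInf {ℓ : ℕ | 0 < ℓ ∧ ∃ f : V → ℕ, IsElegantCLabelling G h p ℓ f}

/-- `Δ₂(G) = max over edges uv of (deg u + deg v)`. -/
noncomputable def deltaTwo {V : Type} (G : SimpleGraph V) [Fintype V] [DecidableRel G.Adj] : ℕ :=
  sSup {d : ℕ | ∃ u v : V, G.Adj u v ∧ d = G.degree u + G.degree v}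


set_option linter.unusedSectionVars false

section Aux11
section SA
variable {V : Type} (G : SimpleGraph V)

lemma path_length_eq (hT : G.IsTree) {u v : V} (p : G.Walk u v) (hp : p.IsPath) :
    p.length = G.dist u v := by
  obtain ⟨q, hq, hql⟩ := hT.isConnected.exists_path_of_dist u v
  obtain ⟨w, -, hwu⟩ := hT.existsUnique_path u v
  rw [hwu p hp, ← hwu q hq, hql]

lemma concat_isPath {u v w : V} {p : G.Walk u v} (hp : p.IsPath) (h : G.Adj v w)
    (hw : w ∉ p.support) : (p.concat h).IsPath := by
  have : (p.concat h).reverse.IsPath := by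
    rw [Walk.reverse_concat]
    exact (hp.reverse).cons (by simpa using hw)
  have h2 := this.reverse
  rw [Walk.reverse_reverse] at h2
  exact h2

lemma geodesic_support (hT : G.IsTree) {r u x : V} {p : G.Walk r u}
    (hpl : p.length = G.dist r u) (hx : x ∈ p.support) :
    G.dist r x + G.dist x u = G.dist r u := by
  classical
  have hc := hT.isConnected
  have h1 : G.dist r x ≤ (p.takeUntil x hx).length := dist_le _
  have h2 : G.dist x u ≤ (p.dropUntil x hx).length := dist_le _
  have h3 : (p.takeUntil x hx).length + (p.dropUntil x hx).length = p.length := by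
    rw [← Walk.length_append, p.take_spec hx]
  have h4 := hc.dist_triangle (u := r) (v := x) (w := u)
  omega

/-- Adjacent vertices have distances to the root differing by exactly one. -/
lemma adj_dist (hT : G.IsTree) (r : V) {u v : V} (huv : G.Adj u v) :
    G.dist r v = G.dist r u + 1 ∨ G.dist r u = G.dist r v + 1 := by
  have hc := hT.isConnected
  have hone : G.dist u v = 1 := dist_eq_one_iff_adj.mpr huv
  have h1 : G.dist r v ≤ G.dist r u + 1 := by
    have h := hc.dist_triangle (u := r) (v := u) (w := v); omega
  have h2 : G.dist r u ≤ G.dist r v + 1 := by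
    have h := hc.dist_triangle (u := r) (v := v) (w := u)
    have : G.dist v u = 1 := dist_eq_one_iff_adj.mpr huv.symm
    omega
  rcases Nat.lt_trichotomy (G.dist r u) (G.dist r v) with hlt | heq | hgt
  · left; omega
  · -- impossible: equal distances
    exfalso
    obtain ⟨p, hp, hpl⟩ := hc.exists_path_of_dist r u
    have hvns : v ∉ p.support := by
      intro hvs
      have h5 := geodesic_support G hT hpl hvs
      have h6 : G.dist v u = 0 := by omega
      exact huv.ne' ((hc.dist_eq_zero_iff).mp h6)
    have hpath := concat_isPath G hp huv hvns
    have := path_length_eq G hT _ hpath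
    rw [Walk.length_concat] at this
    omega
  · right; omega

lemma exists_parent (hT : G.IsTree) (r : V) {v : V} {n : ℕ} (hv : G.dist r v = n + 1) :
    ∃ u, G.Adj u v ∧ G.dist r u = n := by
  have hc := hT.isConnected
  obtain ⟨p, hp, hpl⟩ := hc.exists_path_of_dist r v
  rw [hv] at hpl
  have := p.reverse
  -- decompose the reverse walk
  rcases hq : p.reverse with _ | ⟨hadj, q⟩
  · have : p.reverse.length = 0 := by rw [hq]; rfl
    rw [Walk.length_reverse] at this; omega
  · rename_i x
    have hxv : G.Adj x v := hadj.symm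
    refine ⟨x, hxv, ?_⟩
    have hql : q.length = n := by
      have : p.reverse.length = n + 1 := by rw [Walk.length_reverse]; omega
      rw [hq] at this; simpa using this
    have hle : G.dist r x ≤ n := by
      have := dist_le q.reverse
      simpa [hql] using this
    rcases adj_dist G hT r hxv with h | h <;> omega

lemma parent_unique (hT : G.IsTree) (r : V) {v u₁ u₂ : V} {n : ℕ}
    (h₁ : G.Adj u₁ v) (h₂ : G.Adj u₂ v) (hd₁ : G.dist r u₁ = n) (hd₂ : G.dist r u₂ = n)
    (hv : G.dist r v = n + 1) : u₁ = u₂ := by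
  have hc := hT.isConnected
  obtain ⟨p₁, hp₁, hpl₁⟩ := hc.exists_path_of_dist r u₁
  obtain ⟨p₂, hp₂, hpl₂⟩ := hc.exists_path_of_dist r u₂
  have hv₁ : v ∉ p₁.support := fun hs => by
    have := geodesic_support G hT hpl₁ hs; omega
  have hv₂ : v ∉ p₂.support := fun hs => by
    have := geodesic_support G hT hpl₂ hs; omega
  have q₁ := concat_isPath G hp₁ h₁ hv₁
  have q₂ := concat_isPath G hp₂ h₂ hv₂
  obtain ⟨w, -, hwu⟩ := hT.existsUnique_path r v
  have heq : p₁.concat h₁ = p₂.concat h₂ := by rw [hwu _ q₁, hwu _ q₂]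
  have := congrArg (fun w => w.reverse.getVert 1) heq
  simpa [Walk.reverse_concat, Walk.getVert_cons_succ] using this

end SA

section SB
variable {V : Type} [Fintype V] (G : SimpleGraph V) [DecidableRel G.Adj] (r : V)

/-- children of `u` w.r.t. root `r`. -/
noncomputable def chl (u : V) : Finset V :=
  (G.neighborFinset u).filter fun w => G.dist r w = G.dist r u + 1

/-- parent of `v` w.r.t. root `r`. -/
noncomputable def par (v : V) : V :=
  if h : ∃ u, G.Adj u v ∧ G.dist r u + 1 = G.dist r v then h.choose else r

open Classical in
/-- a chosen injection on the children of `u` avoiding `forb` (when `u ≠ r`). -/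
noncomputable def inj (D : ℕ) (u : V) (forb : ℕ) : V → ℕ :=
  if h : ∃ σ : V → ℕ, Set.InjOn σ (chl G r u) ∧ (∀ w ∈ chl G r u, σ w < D) ∧
      (u ≠ r → ∀ w ∈ chl G r u, σ w ≠ forb) then h.choose else fun _ => 0

noncomputable def offAux (D : ℕ) : ℕ → V → ℕ
  | 0, _ => 0
  | n+1, v => if G.dist r v = n + 1 then
      inj G r D (par G r v) (D - 1 - offAux D n (par G r v)) v else offAux D n v

noncomputable def off (D : ℕ) (v : V) : ℕ := offAux G r D (G.dist r v) v

noncomputable def labAux (D hh ℓ : ℕ) : ℕ → V → ℕ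
  | 0, _ => 0
  | n+1, v => if G.dist r v = n + 1 then
      (labAux D hh ℓ n (par G r v) + hh + off G r D v) % ℓ else labAux D hh ℓ n v

noncomputable def lab (D hh ℓ : ℕ) (v : V) : ℕ := labAux G r D hh ℓ (G.dist r v) v

lemma offAux_stable (D : ℕ) {n m : ℕ} (hnm : n ≤ m) {v : V} (hv : G.dist r v ≤ n) :
    offAux G r D m v = offAux G r D n v := by
  induction m with
  | zero =>
    have h0 : n = 0 := by omega
    rw [h0]
  | succ m ih =>
    rcases Nat.eq_or_lt_of_le hnm with h | h
    · rw [h]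
    · have h1 : n ≤ m := by omega
      rw [offAux]
      have : ¬ G.dist r v = m + 1 := by omega
      simp only [this, if_false]
      exact ih h1

lemma labAux_stable (D hh ℓ : ℕ) {n m : ℕ} (hnm : n ≤ m) {v : V} (hv : G.dist r v ≤ n) :
    labAux G r D hh ℓ m v = labAux G r D hh ℓ n v := by
  induction m with
  | zero =>
    have h0 : n = 0 := by omega
    rw [h0]
  | succ m ih =>
    rcases Nat.eq_or_lt_of_le hnm with h | h
    · rw [h]
    · have h1 : n ≤ m := by omega
      rw [labAux]
      have : ¬ G.dist r v = m + 1 := by omega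
      simp only [this, if_false]
      exact ih h1

lemma lab_lt (D hh ℓ : ℕ) (hl : 0 < ℓ) (v : V) : lab G r D hh ℓ v < ℓ := by
  suffices h : ∀ n v, labAux G r D hh ℓ n v < ℓ from h _ v
  intro n
  induction n with
  | zero => intro v; simpa [labAux] using hl
  | succ n ih =>
    intro v
    rw [labAux]
    split
    · exact Nat.mod_lt _ hl
    · exact ih v

end SB

section SC
variable {V : Type} [Fintype V] {G : SimpleGraph V} [DecidableRel G.Adj] {r : V}

lemma mem_chl {u w : V} : w ∈ chl G r u ↔ G.Adj u w ∧ G.dist r w = G.dist r u + 1 := by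
  simp [chl, mem_neighborFinset]

lemma par_spec (hT : G.IsTree) {v : V} (hv : v ≠ r) :
    G.Adj (par G r v) v ∧ G.dist r (par G r v) + 1 = G.dist r v := by
  have hd : G.dist r v ≠ 0 := by
    simp only [ne_eq, hT.isConnected.dist_eq_zero_iff]
    exact fun h => hv h.symm
  obtain ⟨n, hn⟩ : ∃ n, G.dist r v = n + 1 := ⟨G.dist r v - 1, by omega⟩
  obtain ⟨u, hu, hud⟩ := exists_parent G hT r hn
  have hex : ∃ u, G.Adj u v ∧ G.dist r u + 1 = G.dist r v := ⟨u, hu, by omega⟩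
  rw [par, dif_pos hex]
  exact hex.choose_spec

lemma par_eq (hT : G.IsTree) {u v : V} (huv : G.Adj u v)
    (hd : G.dist r v = G.dist r u + 1) : par G r v = u := by
  have hv : v ≠ r := by
    intro h; rw [h, dist_self] at hd; omega
  obtain ⟨h1, h2⟩ := par_spec hT hv
  exact parent_unique G hT r h1 huv (by omega) rfl hd

lemma edge_classify (hT : G.IsTree) {u v : V} (huv : G.Adj u v) :
    (v ≠ r ∧ par G r v = u ∧ G.dist r v = G.dist r u + 1) ∨
    (u ≠ r ∧ par G r u = v ∧ G.dist r u = G.dist r v + 1) := by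
  rcases adj_dist G hT r huv with h | h
  · left
    refine ⟨?_, par_eq hT huv h, h⟩
    intro hv; rw [hv, dist_self] at h; omega
  · right
    refine ⟨?_, par_eq hT huv.symm h, h⟩
    intro hu; rw [hu, dist_self] at h; omega

lemma chl_card {D : ℕ} (hT : G.IsTree) (hD : ∀ w, G.degree w ≤ D) (u : V) :
    (chl G r u).card ≤ D ∧ (u ≠ r → (chl G r u).card ≤ D - 1) := by
  classical
  have hsub : chl G r u ⊆ G.neighborFinset u := Finset.filter_subset _ _
  constructor
  · calc (chl G r u).card ≤ (G.neighborFinset u).card := Finset.card_le_card hsub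
      _ = G.degree u := rfl
      _ ≤ D := hD u
  · intro hu
    obtain ⟨h1, h2⟩ := par_spec hT hu
    have hmem : par G r u ∈ G.neighborFinset u := by
      rw [mem_neighborFinset]; exact h1.symm
    have hnotc : par G r u ∉ chl G r u := by
      rw [mem_chl]; rintro ⟨-, h3⟩; omega
    have hsub2 : chl G r u ⊆ (G.neighborFinset u).erase (par G r u) :=
      Finset.subset_erase.mpr ⟨hsub, hnotc⟩
    calc (chl G r u).card ≤ ((G.neighborFinset u).erase (par G r u)).card :=
          Finset.card_le_card hsub2
      _ = G.degree u - 1 := by rw [Finset.card_erase_of_mem hmem]; rfl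
      _ ≤ D - 1 := by have := hD u; omega

lemma inj_exists {D : ℕ} (hT : G.IsTree) (hD : ∀ w, G.degree w ≤ D) (u : V) (forb : ℕ) :
    ∃ σ : V → ℕ, Set.InjOn σ (chl G r u) ∧ (∀ w ∈ chl G r u, σ w < D) ∧
      (u ≠ r → ∀ w ∈ chl G r u, σ w ≠ forb) := by
  classical
  set s := chl G r u with hs
  by_cases hu : u = r
  · refine ⟨fun w => if hw : w ∈ s then ((s.equivFin ⟨w, hw⟩ : Fin s.card) : ℕ) else 0,
      ?_, ?_, ?_⟩
    · intro a ha b hb hab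
      rw [Finset.mem_coe] at ha hb
      simp only [dif_pos ha, dif_pos hb] at hab
      have := s.equivFin.injective (Fin.val_injective hab)
      exact Subtype.mk_eq_mk.mp this
    · intro w hw
      simp only [dif_pos hw]
      have h1 : ((s.equivFin ⟨w, hw⟩ : Fin s.card) : ℕ) < s.card := Fin.is_lt _
      have h2 : s.card ≤ D := (chl_card (r := r) hT hD u).1
      omega
    · intro h; exact absurd hu h
  · have hcard : s.card ≤ D - 1 := (chl_card (r := r) hT hD u).2 hu
    refine ⟨fun w => if hw : w ∈ s then
        (if ((s.equivFin ⟨w, hw⟩ : Fin s.card) : ℕ) < forb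
          then ((s.equivFin ⟨w, hw⟩ : Fin s.card) : ℕ)
          else ((s.equivFin ⟨w, hw⟩ : Fin s.card) : ℕ) + 1) else 0, ?_, ?_, ?_⟩
    · intro a ha b hb hab
      rw [Finset.mem_coe] at ha hb
      simp only [dif_pos ha, dif_pos hb] at hab
      set i := ((s.equivFin ⟨a, ha⟩ : Fin s.card) : ℕ) with hi
      set j := ((s.equivFin ⟨b, hb⟩ : Fin s.card) : ℕ) with hj
      have hij : i = j := by
        rcases lt_or_ge i forb with h1 | h1 <;> rcases lt_or_ge j forb with h2 | h2 <;>
          simp only [if_pos, if_neg, h1, h2, if_true, if_false, not_lt] at hab <;> omega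
      have := s.equivFin.injective (Fin.val_injective hij)
      exact Subtype.mk_eq_mk.mp this
    · intro w hw
      simp only [dif_pos hw]
      have h1 : ((s.equivFin ⟨w, hw⟩ : Fin s.card) : ℕ) < s.card := Fin.is_lt _
      split <;> omega
    · intro _ w hw
      simp only [dif_pos hw]
      split <;> omega
lemma inj_spec {D : ℕ} (hT : G.IsTree) (hD : ∀ w, G.degree w ≤ D) (u : V) (forb : ℕ) :
    Set.InjOn (inj G r D u forb) (chl G r u) ∧ (∀ w ∈ chl G r u, inj G r D u forb w < D) ∧
      (u ≠ r → ∀ w ∈ chl G r u, inj G r D u forb w ≠ forb) := by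
  have hex := inj_exists (r := r) hT hD u forb
  rw [inj, dif_pos hex]
  exact hex.choose_spec

lemma dist_pos_of_ne (hT : G.IsTree) {v : V} (hv : v ≠ r) : G.dist r v ≠ 0 := by
  simp only [ne_eq, hT.isConnected.dist_eq_zero_iff]
  exact fun h => hv h.symm

lemma off_spec {D : ℕ} (hT : G.IsTree) {v : V} (hv : v ≠ r) :
    off G r D v = inj G r D (par G r v) (D - 1 - off G r D (par G r v)) v := by
  have hd := dist_pos_of_ne hT hv
  obtain ⟨n, hn⟩ : ∃ n, G.dist r v = n + 1 := ⟨G.dist r v - 1, by omega⟩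
  have hpd : G.dist r (par G r v) = n := by
    have := (par_spec hT hv).2; omega
  have h1 : off G r D v = offAux G r D (n+1) v := by rw [off, hn]
  rw [h1, offAux, if_pos hn]
  have hst : offAux G r D n (par G r v) = off G r D (par G r v) := by
    rw [off, hpd]
  rw [hst]

lemma off_lt {D : ℕ} (hT : G.IsTree) (hD : ∀ w, G.degree w ≤ D) (hD1 : 1 ≤ D) (v : V) :
    off G r D v < D := by
  by_cases hv : v = r
  · rw [hv, off, dist_self]
    simp [offAux]; omega
  · have hspec := off_spec (D := D) hT hv
    have hmem : v ∈ chl G r (par G r v) := by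
      rw [mem_chl]
      obtain ⟨h1, h2⟩ := par_spec hT hv
      exact ⟨h1, by omega⟩
    rw [hspec]
    exact (inj_spec (r := r) hT hD _ _).2.1 v hmem

lemma mem_chl_par (hT : G.IsTree) {v : V} (hv : v ≠ r) : v ∈ chl G r (par G r v) := by
  rw [mem_chl]
  obtain ⟨h1, h2⟩ := par_spec hT hv
  exact ⟨h1, by omega⟩

lemma off_sibling_ne {D : ℕ} (hT : G.IsTree) (hD : ∀ w, G.degree w ≤ D) {u v : V}
    (hu : u ≠ r) (hv : v ≠ r) (hp : par G r u = par G r v) (huv : u ≠ v) :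
    off G r D u ≠ off G r D v := by
  intro heq
  have h1 := off_spec (D := D) hT hu
  have h2 := off_spec (D := D) hT hv
  rw [hp] at h1
  apply huv
  refine (inj_spec (r := r) hT hD (par G r v) (D - 1 - off G r D (par G r v))).1 ?_ ?_ ?_
  · exact Finset.mem_coe.mpr (hp ▸ mem_chl_par hT hu)
  · exact Finset.mem_coe.mpr (mem_chl_par hT hv)
  · rw [← h1, ← h2, heq]

lemma off_avoid {D : ℕ} (hT : G.IsTree) (hD : ∀ w, G.degree w ≤ D) {v : V}
    (hv : v ≠ r) (hpr : par G r v ≠ r) :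
    off G r D v ≠ D - 1 - off G r D (par G r v) := by
  have h1 := off_spec (D := D) hT hv
  rw [h1]
  exact (inj_spec (r := r) hT hD _ _).2.2 hpr v (mem_chl_par hT hv)

lemma lab_spec {D hh ℓ : ℕ} (hT : G.IsTree) {v : V} (hv : v ≠ r) :
    lab G r D hh ℓ v = (lab G r D hh ℓ (par G r v) + hh + off G r D v) % ℓ := by
  have hd := dist_pos_of_ne hT hv
  obtain ⟨n, hn⟩ : ∃ n, G.dist r v = n + 1 := ⟨G.dist r v - 1, by omega⟩
  have hpd : G.dist r (par G r v) = n := by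
    have := (par_spec hT hv).2; omega
  have h1 : lab G r D hh ℓ v = labAux G r D hh ℓ (n+1) v := by rw [lab, hn]
  rw [h1, labAux, if_pos hn]
  have hst : labAux G r D hh ℓ n (par G r v) = lab G r D hh ℓ (par G r v) := by
    rw [lab, hpd]
  rw [hst]

lemma down_cong {D hh ℓ : ℕ} (hT : G.IsTree) {v : V} (hv : v ≠ r) :
    ((lab G r D hh ℓ v : ZMod ℓ)) =
      (lab G r D hh ℓ (par G r v) : ZMod ℓ) + ((hh + off G r D v : ℕ) : ZMod ℓ) := by
  rw [lab_spec hT hv, ZMod.natCast_mod]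
  push_cast
  ring

end SC

section T6
variable {V : Type} {G : SimpleGraph V}

lemma walk_len2 {u v : V} (p : G.Walk u v) (hp : p.length = 2) :
    ∃ w, G.Adj u w ∧ G.Adj w v := by
  cases p with
  | nil => simp at hp
  | cons h q =>
    cases q with
    | nil => simp at hp
    | cons h2 q2 =>
      cases q2 with
      | nil => exact ⟨_, h, h2⟩
      | cons h3 q3 => simp [Walk.length_cons] at hp

lemma walk_len3 {u v : V} (p : G.Walk u v) (hp : p.length = 3) :
    ∃ w x, G.Adj u w ∧ G.Adj w x ∧ G.Adj x v := by
  cases p with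
  | nil => simp at hp
  | cons h q =>
    have hq : q.length = 2 := by simp [Walk.length_cons] at hp; omega
    obtain ⟨x, h1, h2⟩ := walk_len2 q hq
    exact ⟨_, x, h, h1, h2⟩

lemma ne_of_shift2 {ℓ a b c c' : ℕ}
    (hc : (b : ZMod ℓ) + ((c' : ℕ) : ZMod ℓ) = (a : ZMod ℓ) + ((c : ℕ) : ZMod ℓ))
    (h1 : c' < c) (h2 : c < c' + 2*ℓ) (h3 : c ≠ c' + ℓ) : a ≠ b := by
  intro heq
  subst heq
  have hcc : ((c' : ℕ) : ZMod ℓ) = ((c : ℕ) : ZMod ℓ) := by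
    exact add_left_cancel hc
  have hmod : c' ≡ c [MOD ℓ] := (ZMod.natCast_eq_natCast_iff _ _ _).mp hcc
  have hdvd : ℓ ∣ c - c' := (Nat.modEq_iff_dvd' h1.le).mp hmod
  obtain ⟨k, hk⟩ := hdvd
  match k with
  | 0 => omega
  | 1 => omega
  | (k+2) =>
    have : ℓ*2 ≤ ℓ*(k+2) := Nat.mul_le_mul_left _ (by omega)
    omega

lemma cyc_ge_one {ℓ a b : ℕ} (ha : a < ℓ) (hb : b < ℓ) (hne : a ≠ b) :
    1 ≤ cycDist ℓ a b := by
  rw [cycDist, le_min_iff]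
  have hab : (a : ℤ) ≠ b := by exact_mod_cast hne
  constructor <;> rcases abs_cases ((a:ℤ) - b) with ⟨he, hs⟩ | ⟨he, hs⟩ <;> rw [he] <;> omega

lemma cyc_ge_h {ℓ hh i a b : ℕ} (ha : a < ℓ) (hb : b < ℓ)
    (hcong : (b : ZMod ℓ) = (a : ZMod ℓ) + ((hh + i : ℕ) : ZMod ℓ))
    (hgood : 2*hh + i ≤ ℓ) : (hh : ℤ) ≤ cycDist ℓ a b := by
  have hcast : ((a + (hh + i) : ℕ) : ZMod ℓ) = (b : ZMod ℓ) := by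
    push_cast at hcong ⊢
    linear_combination -hcong
  have hmod : (a + (hh + i)) ≡ b [MOD ℓ] := (ZMod.natCast_eq_natCast_iff _ _ _).mp hcast
  have hdvd : (ℓ:ℤ) ∣ (b:ℤ) - (a + (hh + i)) := hmod.dvd
  obtain ⟨k, hk⟩ := hdvd
  have hk4 : k ≤ -2 ∨ k = -1 ∨ k = 0 ∨ 1 ≤ k := by omega
  have hlnn : (0:ℤ) ≤ (ℓ:ℤ) := by positivity
  have hrange : (ℓ:ℤ)*k = -ℓ ∨ (ℓ:ℤ)*k = 0 := by
    rcases hk4 with h | h | h | h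
    · exfalso
      have : (ℓ:ℤ)*k ≤ (ℓ:ℤ)*(-2) := mul_le_mul_of_nonneg_left h hlnn
      omega
    · left; rw [h]; ring
    · right; rw [h]; ring
    · exfalso
      have : (ℓ:ℤ)*1 ≤ (ℓ:ℤ)*k := mul_le_mul_of_nonneg_left h hlnn
      omega
  rw [cycDist, le_min_iff]
  constructor <;> rcases abs_cases ((a:ℤ) - b) with ⟨he, hs⟩ | ⟨he, hs⟩ <;> rw [he] <;> omega

end T6

section SD
variable {V : Type} [Fintype V] {G : SimpleGraph V} [DecidableRel G.Adj]

lemma cyc_comm (ℓ a b : ℕ) : cycDist ℓ a b = cycDist ℓ b a := by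
  rw [cycDist, cycDist, abs_sub_comm]

lemma construction (r : V) (hT : G.IsTree) {D hh : ℕ}
    (hdeg : ∀ w, G.degree w ≤ D) (hD3 : 3 ≤ D) (hhD : D ≤ hh) :
    IsElegantCLabelling G hh 1 (2*hh + D - 1) (lab G r D hh (2*hh + D - 1)) := by
  set ℓ := 2*hh + D - 1 with hℓ
  have hl : 0 < ℓ := by omega
  set f := lab G r D hh ℓ with hfdef
  set o := off G r D with hodef
  have hflt : ∀ v, f v < ℓ := fun v => lab_lt G r D hh ℓ hl v
  have holt : ∀ v, o v < D := fun v => off_lt hT hdeg (by omega) v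
  have hedge : ∀ ⦃u v : V⦄, G.Adj u v →
      (v ≠ r ∧ par G r v = u ∧ (f v : ZMod ℓ) = (f u : ZMod ℓ) + ((hh + o v : ℕ) : ZMod ℓ)) ∨
      (u ≠ r ∧ par G r u = v ∧ (f u : ZMod ℓ) = (f v : ZMod ℓ) + ((hh + o u : ℕ) : ZMod ℓ)) := by
    intro u v huv
    rcases edge_classify hT huv with ⟨h1, h2, h3⟩ | ⟨h1, h2, h3⟩
    · left
      refine ⟨h1, h2, ?_⟩
      have := down_cong (D := D) (hh := hh) (ℓ := ℓ) hT h1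
      rw [h2] at this
      exact this
    · right
      refine ⟨h1, h2, ?_⟩
      have := down_cong (D := D) (hh := hh) (ℓ := ℓ) hT h1
      rw [h2] at this
      exact this
  have havoid : ∀ ⦃w v : V⦄, v ≠ r → par G r v = w → w ≠ r → o w + o v ≠ D - 1 := by
    intro w v hv hp hw
    have h1 := off_avoid (D := D) hT hdeg hv (hp ▸ hw)
    rw [hp] at h1
    simp only [← hodef] at h1
    have h2 := holt w
    have h3 := holt v
    omega
  have hsib : ∀ ⦃u v w : V⦄, u ≠ r → v ≠ r → par G r u = w → par G r v = w → u ≠ v →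
      o u ≠ o v := by
    intro u v w hu hv hpu hpv huv
    exact off_sibling_ne hT hdeg hu hv (by rw [hpu, hpv]) huv
  constructor
  · refine ⟨hflt, ?_, ?_⟩
    · -- distance one
      intro u v hd
      have huv := dist_eq_one_iff_adj.mp hd
      rcases hedge huv with ⟨-, -, hc⟩ | ⟨-, -, hc⟩
      · have h1 := holt v
        exact cyc_ge_h (hflt u) (hflt v) hc (by omega)
      · rw [cyc_comm]
        have h1 := holt u
        exact cyc_ge_h (hflt v) (hflt u) hc (by omega)
    · -- distance two or three
      intro u v hd
      have hne : u ≠ v := by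
        intro he; subst he; rw [SimpleGraph.dist_self] at hd; omega
      have hfne : f u ≠ f v := by
        rcases hd with h2 | h3
        · -- distance 2
          obtain ⟨p, hp, hpl⟩ := hT.isConnected.exists_path_of_dist u v
          rw [h2] at hpl
          obtain ⟨w, ha1, ha2⟩ := walk_len2 p hpl
          rcases hedge ha1 with ⟨hw, hpw, e1⟩ | ⟨hu, hpu, e1⟩ <;>
            rcases hedge ha2 with ⟨hv, hpv, e2⟩ | ⟨hw2, hpw2, e2⟩
          · -- DD
            have hav := havoid hv hpv hw
            have h1 := holt w; have h2' := holt v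
            refine ne_of_shift2 (ℓ := ℓ) (c' := 0) (c := 2*hh + o w + o v) ?_ (by omega) (by omega)
              (by omega)
            push_cast at e1 e2 ⊢
            linear_combination e1 + e2
          · -- DU : u = v, contradiction
            exact absurd (hpw ▸ hpw2) hne
          · -- UD : siblings
            have hov := hsib hu hv hpu hpv hne
            have h1 := holt u; have h2' := holt v
            rcases lt_or_gt_of_ne hov with hlt | hgt
            · refine ne_of_shift2 (ℓ := ℓ) (c' := hh + o u) (c := hh + o v) ?_ (by omega) (by omega)
                (by omega)
              push_cast at e1 e2 ⊢
              linear_combination e2 - e1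
            · refine (ne_of_shift2 (ℓ := ℓ) (c' := hh + o v) (c := hh + o u) ?_ (by omega) (by omega)
                (by omega)).symm
              push_cast at e1 e2 ⊢
              linear_combination e1 - e2
          · -- UU
            have hav := havoid hu hpu hw2
            have h1 := holt w; have h2' := holt u
            refine (ne_of_shift2 (ℓ := ℓ) (c' := 0) (c := 2*hh + o w + o u) ?_ (by omega) (by omega)
              (by omega)).symm
            push_cast at e1 e2 ⊢
            linear_combination e1 + e2
        · -- distance 3
          obtain ⟨p, hp, hpl⟩ := hT.isConnected.exists_path_of_dist u v
          rw [h3] at hpl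
          obtain ⟨w, x, ha1, ha2, ha3⟩ := walk_len3 p hpl
          have h1 := holt u; have h2' := holt v; have h3' := holt w; have h4' := holt x
          rcases hedge ha1 with ⟨hw, hpw, e1⟩ | ⟨hu, hpu, e1⟩ <;>
            rcases hedge ha2 with ⟨hx, hpx, e2⟩ | ⟨hw2, hpw2, e2⟩ <;>
              rcases hedge ha3 with ⟨hv, hpv, e3⟩ | ⟨hx2, hpx2, e3⟩
          · -- DDD
            refine ne_of_shift2 (ℓ := ℓ) (c' := 0) (c := 3*hh + (o w + o x + o v)) ?_ (by omega)
              (by omega) (by omega)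
            push_cast at e1 e2 e3 ⊢
            linear_combination e1 + e2 + e3
          · -- DDU
            refine ne_of_shift2 (ℓ := ℓ) (c' := hh + o x) (c := 2*hh + (o w + o x)) ?_ (by omega)
              (by omega) (by omega)
            push_cast at e1 e2 e3 ⊢
            linear_combination e1 + e2 - e3
          · -- DUD
            refine ne_of_shift2 (ℓ := ℓ) (c' := hh + o w) (c := 2*hh + (o w + o v)) ?_ (by omega)
              (by omega) (by omega)
            push_cast at e1 e2 e3 ⊢
            linear_combination e1 - e2 + e3
          · -- DUU
            refine (ne_of_shift2 (ℓ := ℓ) (c' := 0) (c := hh + o x) ?_ (by omega) (by omega)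
              (by omega)).symm
            push_cast at e1 e2 e3 ⊢
            linear_combination e2 + e3 - e1
          · -- UDD
            refine ne_of_shift2 (ℓ := ℓ) (c' := hh + o u) (c := 2*hh + (o x + o v)) ?_ (by omega)
              (by omega) (by omega)
            push_cast at e1 e2 e3 ⊢
            linear_combination e2 + e3 - e1
          · -- UDU
            refine (ne_of_shift2 (ℓ := ℓ) (c' := 0) (c := hh + o u) ?_ (by omega) (by omega)
              (by omega)).symm
            push_cast at e1 e2 e3 ⊢
            linear_combination e1 + e3 - e2
          · -- UUD
            refine (ne_of_shift2 (ℓ := ℓ) (c' := hh + o v) (c := 2*hh + (o u + o w)) ?_ (by omega)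
              (by omega) (by omega)).symm
            push_cast at e1 e2 e3 ⊢
            linear_combination e1 + e2 - e3
          · -- UUU
            refine (ne_of_shift2 (ℓ := ℓ) (c' := 0) (c := 3*hh + (o u + o w + o x)) ?_ (by omega)
              (by omega) (by omega)).symm
            push_cast at e1 e2 e3 ⊢
            linear_combination e1 + e2 + e3
      exact cyc_ge_one (hflt u) (hflt v) hfne
  · -- elegance
    refine ⟨fun u => {z : ZMod ℓ | ∃ i : ℕ, i ≤ D - 1 ∧
        z = ((f u + hh : ℕ) : ZMod ℓ) + (i : ZMod ℓ)}, ?_, ?_, ?_⟩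
    · intro u
      exact ⟨((f u + hh : ℕ) : ZMod ℓ), D - 1, rfl⟩
    · intro u w hadj
      rcases hedge hadj with ⟨hw, hpw, e⟩ | ⟨hu, hpu, e⟩
      · refine ⟨o w, by have := holt w; omega, ?_⟩
        push_cast at e ⊢
        linear_combination e
      · refine ⟨D - 1 - o u, by omega, ?_⟩
        have hou := holt u
        have hsum : ((hh + (D - 1 - o u) + (hh + o u) : ℕ) : ZMod ℓ) = 0 := by
          have : hh + (D - 1 - o u) + (hh + o u) = ℓ := by omega
          rw [this]
          exact ZMod.natCast_self ℓ
        set j := D - 1 - o u with hj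
        push_cast at e hsum ⊢
        linear_combination - e - hsum
    · intro u v hadj
      rw [Set.eq_empty_iff_forall_notMem]
      rintro z ⟨⟨i, hi, hzu⟩, ⟨j, hj, hzv⟩⟩
      rcases hedge hadj with ⟨hv, hpv, e⟩ | ⟨hu, hpu, e⟩
      · refine ne_of_shift2 (ℓ := ℓ) (a := 0) (b := 0) (c' := i) (c := hh + (o v + j)) ?_
          (by have := holt v; omega) (by have := holt v; omega)
          (by have := holt v; omega) rfl
        push_cast at e hzu hzv ⊢
        linear_combination hzv - hzu + e
      · refine ne_of_shift2 (ℓ := ℓ) (a := 0) (b := 0) (c' := j) (c := hh + (o u + i)) ?_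
          (by have := holt u; omega) (by have := holt u; omega)
          (by have := holt u; omega) rfl
        push_cast at e hzu hzv ⊢
        linear_combination hzu - hzv + e

end SD

section SE
variable {V : Type} [Fintype V] {G : SimpleGraph V} [DecidableRel G.Adj]

lemma no_triangle (hT : G.IsTree) {a b c : V} (hab : G.Adj a b) (hbc : G.Adj b c)
    (hac : a ≠ c) : ¬ G.Adj a c := by
  intro h
  have p1 : G.Walk a c := Walk.cons h Walk.nil
  have p2 : G.Walk a c := Walk.cons hab (Walk.cons hbc Walk.nil)
  have h1 : (Walk.cons h (Walk.nil : G.Walk c c)).IsPath := by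
    simp [Walk.isPath_def, hac]
  have h2 : (Walk.cons hab (Walk.cons hbc (Walk.nil : G.Walk c c))).IsPath := by
    simp [Walk.isPath_def, hab.ne, hbc.ne, hac]
  obtain ⟨q, -, huq⟩ := hT.existsUnique_path a c
  have := (huq _ h1).trans (huq _ h2).symm
  have hlen := congrArg Walk.length this
  simp [Walk.length_cons] at hlen

lemma cyc_self (ℓ a : ℕ) (hl : 0 < ℓ) : cycDist ℓ a a = 0 := by
  simp [cycDist]

lemma mod2 {ℓ v : ℕ} (h : v < 2*ℓ) : v % ℓ = if v < ℓ then v else v - ℓ := by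
  rcases lt_or_ge v ℓ with h1 | h1
  · rw [Nat.mod_eq_of_lt h1, if_pos h1]
  · rw [if_neg (by omega), Nat.mod_eq_sub_mod h1, Nat.mod_eq_of_lt (by omega)]

lemma lower_bound [Nonempty V] (hT : G.IsTree) (hD3 : 3 ≤ G.maxDegree)
    {h ℓ : ℕ} (hl : 0 < ℓ) {f : V → ℕ} (hf : IsCLabelling G h 1 ℓ f) :
    2*h + G.maxDegree - 1 ≤ ℓ := by
  obtain ⟨u, hu⟩ := G.exists_maximal_degree_vertex
  obtain ⟨hflt, hd1, hd23⟩ := hf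
  set φ : V → ℕ := fun w => (f w + ℓ - f u) % ℓ with hφ
  have hm : ∀ w, φ w = if f w + ℓ - f u < ℓ then f w + ℓ - f u else f w + ℓ - f u - ℓ := by
    intro w
    rw [hφ]
    exact mod2 (by have := hflt w; have := hflt u; omega)
  have hmaps : ∀ w ∈ G.neighborFinset u, φ w ∈ Finset.Icc h (ℓ - h) := by
    intro w hw
    rw [mem_neighborFinset] at hw
    have hcyc := hd1 u w (dist_eq_one_iff_adj.mpr hw)
    rw [cycDist, le_min_iff] at hcyc
    obtain ⟨hc1, hc2⟩ := hcyc
    have h1 := hflt w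
    have h2 := hflt u
    rw [Finset.mem_Icc, hm w]
    rcases abs_cases ((f u : ℤ) - (f w : ℤ)) with ⟨he, hs⟩ | ⟨he, hs⟩ <;>
      rw [he] at hc1 hc2 <;> split_ifs <;> omega
  have hinj : Set.InjOn φ (G.neighborFinset u) := by
    intro w₁ hw₁ w₂ hw₂ heq
    rw [Finset.mem_coe, mem_neighborFinset] at hw₁ hw₂
    by_contra hne
    have hnadj : ¬ G.Adj w₁ w₂ := no_triangle hT hw₁.symm hw₂ hne
    have hdist : G.dist w₁ w₂ = 2 := by
      have hle : G.dist w₁ w₂ ≤ 2 := by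
        have := dist_le (Walk.cons hw₁.symm (Walk.cons hw₂ (Walk.nil : G.Walk w₂ w₂)))
        simpa using this
      have hne0 : G.dist w₁ w₂ ≠ 0 := by
        simp only [ne_eq, hT.isConnected.dist_eq_zero_iff]
        exact hne
      have hne1 : G.dist w₁ w₂ ≠ 1 := by
        rw [ne_eq, dist_eq_one_iff_adj]
        exact hnadj
      omega
    have hcyc := hd23 w₁ w₂ (Or.inl hdist)
    have hfne : f w₁ ≠ f w₂ := by
      intro hfe
      rw [hfe, cyc_self ℓ (f w₂) hl] at hcyc
      omega
    have h1 := hflt w₁; have h2 := hflt w₂; have h3 := hflt u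
    rw [hm w₁, hm w₂] at heq
    split_ifs at heq <;> omega
  have hcard := Finset.card_le_card_of_injOn φ hmaps hinj
  rw [Nat.card_Icc] at hcard
  have hdeg : G.degree u = (G.neighborFinset u).card := rfl
  have : G.maxDegree ≤ ℓ - h + 1 - h := by rw [hu, hdeg]; exact hcard
  omega

end SE

end Aux11

theorem stmt11 {V : Type} [Fintype V] (G : SimpleGraph V) [DecidableRel G.Adj]
    (hT : G.IsTree) (hdiam : ∃ u v : V, 3 ≤ G.dist u v) (hD : 3 ≤ G.maxDegree)
    (h : ℕ) (hh : G.maxDegree ≤ h) :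
    sigmaNum G h 1 = 2 * h + G.maxDegree - 1 ∧
    sigmaStar G h 1 = 2 * h + G.maxDegree - 1 := by
  obtain ⟨u0, v0, hge3⟩ := hdiam
  haveI : Nonempty V := ⟨u0⟩
  have hdeg : ∀ w, G.degree w ≤ G.maxDegree := fun w => G.degree_le_maxDegree w
  have hcons := construction (Classical.arbitrary V) hT hdeg hD hh
  have hLpos : 0 < 2 * h + G.maxDegree - 1 := by omega
  have hmemstar : 2 * h + G.maxDegree - 1 ∈
      {ℓ : ℕ | 0 < ℓ ∧ ∃ f : V → ℕ, IsElegantCLabelling G h 1 ℓ f} :=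
    ⟨hLpos, _, hcons⟩
  have hsub : {ℓ : ℕ | 0 < ℓ ∧ ∃ f : V → ℕ, IsElegantCLabelling G h 1 ℓ f} ⊆
      {ℓ : ℕ | 0 < ℓ ∧ ∃ f : V → ℕ, IsCLabelling G h 1 ℓ f} := by
    rintro ℓ ⟨h0, f, hel⟩
    exact ⟨h0, f, hel.1⟩
  have hmem := hsub hmemstar
  have hlow : ∀ ℓ ∈ {ℓ : ℕ | 0 < ℓ ∧ ∃ f : V → ℕ, IsCLabelling G h 1 ℓ f},
      2 * h + G.maxDegree - 1 ≤ ℓ := by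
    rintro ℓ ⟨h0, f, hc⟩
    have := lower_bound hT hD h0 hc
    omega
  constructor
  · refine le_antisymm (Nat.sInf_le hmem) ?_
    exact hlow _ (Nat.sInf_mem ⟨_, hmem⟩)
  · refine le_antisymm (Nat.sInf_le hmemstar) ?_
    exact hlow _ (hsub (Nat.sInf_mem ⟨_, hmemstar⟩))
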